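/- (Characterization of Feasibility, Theorem 1) Let S = {v_1, ..., v_n} be a finite nonempty set of points in ℝ^m and p ∈ ℝ^m. Then p lies in conv(S) if and only if for every point p' ∈ conv(S) with p' ≠ p there exists v_j ∈ S such that d(p', v_j) > d(p, v_j). -/

import Mathlib

open RealInnerProductSpace

/-- **Characterization of Feasibility** (Theorem 1). `p` lies in the convex hull of
`S = {v 1, …, v n}` iff for every `p' ∈ conv(S)` with `p' ≠ p` there is some `v j`
strictly farther from `p'` than from `p`. -/
theorem characterization_of_feasibility {m n : ℕ} (hn : 0 < n)
    (v : Fin n → EuclideanSpace ℝ (Fin m)) (p : EuclideanSpace ℝ (Fin m)) :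
    p ∈ convexHull ℝ (Set.range v) ↔
      ∀ p' ∈ convexHull ℝ (Set.range v), p' ≠ p →
        ∃ j : Fin n, dist p' (v j) > dist p (v j) := by
  constructor
  · intro hp p' hp' hne
    by_contra hcon
    push_neg at hcon
    -- all v j lie in the halfspace {x | ‖p'‖² - ‖p‖² ≤ 2⟪p' - p, x⟫}
    have hhalf : Set.range v ⊆ {x | ‖p'‖ ^ 2 - ‖p‖ ^ 2 ≤ 2 * ⟪p' - p, x⟫} := by
      rintro _ ⟨j, rfl⟩
      have h2 : ‖p' - v j‖ ≤ ‖p - v j‖ := by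
        simpa [dist_eq_norm] using hcon j
      have h3 : ‖p' - v j‖ ^ 2 ≤ ‖p - v j‖ ^ 2 := by
        exact pow_le_pow_left₀ (norm_nonneg _) h2 2
      rw [norm_sub_sq_real, norm_sub_sq_real] at h3
      simp only [Set.mem_setOf_eq, inner_sub_left]
      linarith
    have hconv : Convex ℝ {x : EuclideanSpace ℝ (Fin m) |
        ‖p'‖ ^ 2 - ‖p‖ ^ 2 ≤ 2 * ⟪p' - p, x⟫} := by
      have : Convex ℝ {x : EuclideanSpace ℝ (Fin m) |
          (‖p'‖ ^ 2 - ‖p‖ ^ 2) / 2 ≤ ⟪p' - p, x⟫} :=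
        convex_halfSpace_ge (innerₛₗ ℝ (p' - p)).isLinear _
      convert this using 1
      ext x
      simp only [Set.mem_setOf_eq]
      constructor <;> intro h <;> linarith
    have hpmem : ‖p'‖ ^ 2 - ‖p‖ ^ 2 ≤ 2 * ⟪p' - p, p⟫ :=
      convexHull_min hhalf hconv hp
    have : ‖p' - p‖ ^ 2 ≤ 0 := by
      rw [norm_sub_sq_real]
      rw [inner_sub_left, real_inner_self_eq_norm_sq] at hpmem
      nlinarith [real_inner_comm p' p, real_inner_self_eq_norm_sq p]
    have : p' - p = 0 := by
      have := le_antisymm this (by positivity)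
      simpa [pow_eq_zero_iff] using this
    exact hne (by simpa [sub_eq_zero] using this)
  · intro h
    by_contra hp
    set K := convexHull ℝ (Set.range v) with hK
    have hKconv : Convex ℝ K := convex_convexHull _ _
    have hKclosed : IsClosed K :=
      (Set.finite_range v).isClosed_convexHull (𝕜 := ℝ)
    have hKne : K.Nonempty := ⟨v ⟨0, hn⟩, subset_convexHull _ _ (Set.mem_range_self _)⟩
    obtain ⟨q, hqK, hq⟩ :=
      exists_norm_eq_iInf_of_complete_convex hKne
        hKclosed.isComplete hKconv p
    have hvar : ∀ w ∈ K, ⟪p - q, w - q⟫ ≤ 0 :=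
      (norm_eq_iInf_iff_real_inner_le_zero hKconv hqK).mp hq
    have hqne : q ≠ p := fun hqp => hp (hqp ▸ hqK)
    obtain ⟨j, hj⟩ := h q hqK hqne
    have hvj : ⟪p - q, v j - q⟫ ≤ 0 :=
      hvar _ (subset_convexHull _ _ (Set.mem_range_self _))
    -- but ‖p - v j‖² = ‖p - q‖² + ‖q - v j‖² + 2⟪p - q, q - v j⟫ ≥ ‖q - v j‖²
    have hle : dist q (v j) ≤ dist p (v j) := by
      rw [dist_eq_norm, dist_eq_norm]
      have hsq : ‖q - v j‖ ^ 2 ≤ ‖p - v j‖ ^ 2 := by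
        have hdecomp : p - v j = (p - q) + (q - v j) := by abel
        rw [hdecomp, norm_add_sq_real]
        have : ⟪p - q, q - v j⟫ = - ⟪p - q, v j - q⟫ := by
          rw [← inner_neg_right]; congr 1; abel
        nlinarith [sq_nonneg ‖p - q‖]
      nlinarith [norm_nonneg (q - v j), norm_nonneg (p - v j)]
    exact absurd hj (not_lt.mpr hle)
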